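/- Let R > 0 and let θ : (0,R] → ℝ be continuous and differentiable on (0,R) with ∫₀^R θ(r)²·r dr < ∞ and ∫₀^R θ′(r)²·r dr < ∞. Then there exists k ∈ ℤ with ∫₀^R (θ(r) − kπ)²/r dr < ∞ if and only if ∫₀^R sin²(θ(r))/r dr < ∞. -/

import Mathlib

open MeasureTheory Set Filter Real Topology

lemma sin_sq_sub_int_mul_pi (x : ℝ) (m : ℤ) :
    Real.sin (x - m * π) ^ 2 = Real.sin x ^ 2 := by
  have h := Real.sin_add (x - m * π) (m * π)
  rw [sub_add_cancel, Real.sin_int_mul_pi, mul_zero, add_zero] at h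
  have hc : Real.cos ((m:ℝ) * π) ^ 2 = 1 := by
    have := Real.sin_sq_add_cos_sq ((m:ℝ) * π)
    rw [Real.sin_int_mul_pi] at this; nlinarith
  rw [h, mul_pow, hc, mul_one]

lemma abs_sin_le_abs' (x : ℝ) : |Real.sin x| ≤ |x| := by
  have key : ∀ y : ℝ, 0 ≤ y → |Real.sin y| ≤ |y| := by
    intro y hy
    rcases le_or_gt 1 y with h | h
    · exact (Real.abs_sin_le_one y).trans (by rw [abs_of_nonneg hy]; exact h)
    · have h0 : Real.sin y ≤ y := Real.sin_le hy
      have h1 : 0 ≤ Real.sin y :=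
        Real.sin_nonneg_of_nonneg_of_le_pi hy (by nlinarith [Real.pi_gt_three])
      rw [abs_of_nonneg h1, abs_of_nonneg hy]; exact h0
  rcases le_total 0 x with h | h
  · exact key x h
  · have := key (-x) (by linarith)
    rwa [Real.sin_neg, abs_neg, abs_neg] at this

lemma sq_le_K_mul_sin_sq {x : ℝ} (hx : |x| ≤ 3 * π / 4) :
    x ^ 2 ≤ 9 * π ^ 2 / 8 * Real.sin x ^ 2 := by
  have hs : Real.sin x ^ 2 = Real.sin |x| ^ 2 := by
    rcases abs_cases x with ⟨h, _⟩ | ⟨h, _⟩ <;> rw [h]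
    rw [Real.sin_neg]; ring
  have hy0 : 0 ≤ |x| := abs_nonneg x
  have hpi := Real.pi_gt_three
  rw [hs]
  set y := |x| with hy
  have hx2 : x ^ 2 = y ^ 2 := (sq_abs x).symm
  rw [hx2]
  rcases le_or_gt y (π / 2) with h | h
  · have h1 : 2 / π * y ≤ Real.sin y := Real.mul_le_sin hy0 h
    have h2 : 0 ≤ 2 / π * y := by positivity
    have h5 : (2 / π * y) ^ 2 ≤ Real.sin y ^ 2 := by nlinarith
    have h6 : 9 * π ^ 2 / 8 * ((2 / π * y) ^ 2) = 9 / 2 * y ^ 2 := by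
      field_simp; ring
    nlinarith [mul_le_mul_of_nonneg_left h5 (by positivity : (0:ℝ) ≤ 9 * π ^ 2 / 8), sq_nonneg y]
  · have h1 : Real.sin y = Real.cos (y - π / 2) := by
      rw [← Real.cos_pi_div_two_sub, show π / 2 - y = -(y - π / 2) by ring, Real.cos_neg]
    have h2 : Real.cos (π / 4) ≤ Real.cos (y - π / 2) :=
      Real.cos_le_cos_of_nonneg_of_le_pi (by linarith) (by linarith) (by linarith)
    rw [Real.cos_pi_div_four] at h2
    have h3 : Real.sqrt 2 / 2 ≤ Real.sin y := by rw [h1]; exact h2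
    have h4 : (Real.sqrt 2) ^ 2 = 2 := Real.sq_sqrt (by norm_num)
    have h5 : (Real.sqrt 2 / 2) ^ 2 ≤ Real.sin y ^ 2 := by
      nlinarith [Real.sqrt_nonneg 2]
    have h6 : (Real.sqrt 2 / 2) ^ 2 = 1 / 2 := by rw [div_pow, h4]; norm_num
    nlinarith [mul_le_mul hx hx hy0 (by positivity : (0:ℝ) ≤ 3 * π / 4)]


lemma half_le_sin_sq {x : ℝ} (h1 : π / 2 ≤ x) (h2 : x ≤ 3 * π / 4) :
    1 / 2 ≤ Real.sin x ^ 2 := by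
  have h3 : Real.sin x = Real.cos (x - π / 2) := by
    rw [← Real.cos_pi_div_two_sub, show π / 2 - x = -(x - π / 2) by ring, Real.cos_neg]
  have h4 : Real.cos (π / 4) ≤ Real.cos (x - π / 2) :=
    Real.cos_le_cos_of_nonneg_of_le_pi (by linarith) (by linarith [Real.pi_pos]) (by linarith)
  rw [Real.cos_pi_div_four] at h4
  have h5 : (Real.sqrt 2) ^ 2 = 2 := Real.sq_sqrt (by norm_num)
  rw [h3]
  nlinarith [Real.sqrt_nonneg 2]

lemma crossing_false
    (R r₀ : ℝ) (hr₀ : 0 < r₀) (hr₀R : r₀ < R) (θ : ℝ → ℝ)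
    (hcont : ContinuousOn θ (Ioc 0 R))
    (hdiff : ∀ r ∈ Ioo (0:ℝ) R, DifferentiableAt ℝ θ r)
    (h2 : IntegrableOn (fun r => deriv θ r ^ 2 * r) (Ioo 0 R))
    (hsin : IntegrableOn (fun r => Real.sin (θ r) ^ 2 / r) (Ioo 0 R))
    (hE : ∫ r in Ioc 0 r₀, deriv θ r ^ 2 * r < 1 / 4)
    (hS : ∫ r in Ioc 0 r₀, Real.sin (θ r) ^ 2 / r < 1)
    (m : ℤ) (hm : θ r₀ ≤ m * π + π / 2)
    (r₁ : ℝ) (hr₁ : r₁ ∈ Ioc 0 r₀) (hθr₁ : (m : ℝ) * π + 3 * π / 4 < θ r₁) :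
    False := by
  have hπ := Real.pi_gt_three
  set c : ℝ := m * π + π / 2 with hc
  set d : ℝ := m * π + 3 * π / 4 with hd
  have hcd : c < d := by rw [hc, hd]; linarith
  have hr₁0 : 0 < r₁ := hr₁.1
  have hlt : r₁ < r₀ := lt_of_le_of_ne hr₁.2 (by rintro rfl; linarith)
  have hIcc : Icc r₁ r₀ ⊆ Ioc 0 R := fun x hx => ⟨lt_of_lt_of_le hr₁0 hx.1, hx.2.trans hr₀R.le⟩
  have hcontI : ContinuousOn θ (Icc r₁ r₀) := hcont.mono hIcc
  -- construct b
  set T : Set ℝ := Icc r₁ r₀ ∩ θ ⁻¹' (Iic c) with hT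
  have hTne : r₀ ∈ T := ⟨⟨hlt.le, le_rfl⟩, hm⟩
  have hTclosed : IsClosed T := hcontI.preimage_isClosed_of_isClosed isClosed_Icc isClosed_Iic
  have hTbdd : BddBelow T := (bddBelow_Icc : BddBelow (Icc r₁ r₀)).mono (inter_subset_left)
  set b : ℝ := sInf T with hbdef
  have hbmem : b ∈ T := hTclosed.csInf_mem ⟨r₀, hTne⟩ hTbdd
  have hb1 : b ∈ Icc r₁ r₀ := hbmem.1
  have hbc : θ b ≤ c := hbmem.2
  have hr₁b : r₁ < b := lt_of_le_of_ne hb1.1 (by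
    intro h; rw [← h] at hbc; linarith)
  have habove : ∀ r ∈ Ico r₁ b, c < θ r := by
    intro r hr
    by_contra hcon
    push_neg at hcon
    have : r ∈ T := ⟨⟨hr.1, hr.2.le.trans hb1.2⟩, hcon⟩
    exact absurd (csInf_le hTbdd this) (not_le.2 hr.2)
  -- construct a
  set U : Set ℝ := Icc r₁ b ∩ θ ⁻¹' (Ici d) with hU
  have hUne : r₁ ∈ U := ⟨⟨le_rfl, hr₁b.le⟩, hθr₁.le⟩
  have hUclosed : IsClosed U :=
    ((hcontI.mono (Icc_subset_Icc le_rfl hb1.2)).preimage_isClosed_of_isClosed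
      isClosed_Icc isClosed_Ici)
  have hUbdd : BddAbove U := (bddAbove_Icc (a := r₁) (b := b)).mono (inter_subset_left)
  set a : ℝ := sSup U with hadef
  have hamem : a ∈ U := hUclosed.csSup_mem ⟨r₁, hUne⟩ hUbdd
  have ha1 : a ∈ Icc r₁ b := hamem.1
  have had : d ≤ θ a := hamem.2
  have hab : a < b := lt_of_le_of_ne ha1.2 (by
    intro h; rw [h] at had; linarith)
  have hbelow : ∀ r ∈ Ioc a b, θ r < d := by
    intro r hr
    by_contra hcon
    push_neg at hcon
    have : r ∈ U := ⟨⟨ha1.1.trans hr.1.le, hr.2⟩, hcon⟩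
    exact absurd (le_csSup hUbdd this) (not_le.2 hr.1)
  have ha0 : 0 < a := lt_of_lt_of_le hr₁0 ha1.1
  have hbr₀ : b ≤ r₀ := hb1.2
  have hbR : b < R := lt_of_le_of_lt hbr₀ hr₀R
  have hIooab : Ioo a b ⊆ Ioo 0 R := fun x hx => ⟨ha0.trans hx.1, hx.2.trans hbR⟩
  have hIocab : Ioc a b ⊆ Ioc 0 r₀ := fun x hx => ⟨ha0.trans hx.1, hx.2.trans hbr₀⟩
  -- range of θ on Ioo a b
  have hrange : ∀ r ∈ Ioo a b, c < θ r ∧ θ r < d := fun r hr =>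
    ⟨habove r ⟨ha1.1.trans hr.1.le, hr.2⟩, hbelow r ⟨hr.1, hr.2.le⟩⟩
  -- FTC with AM-GM domination
  have key : ∀ t ∈ Icc a b, |deriv θ t| ≤ 2 * (deriv θ t ^ 2 * t) + 1 / (8 * t) := by
    intro t ht
    have ht0 : 0 < t := ha0.trans_le ht.1
    have h8 : (0:ℝ) < 8 * t := by linarith
    rw [show 2 * (deriv θ t ^ 2 * t) + 1 / (8 * t)
        = (2 * (deriv θ t ^ 2 * t) * (8 * t) + 1) / (8 * t) by field_simp,
      le_div_iff₀ h8]
    rcases abs_cases (deriv θ t) with ⟨h, _⟩ | ⟨h, _⟩ <;> rw [h]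
    · nlinarith [sq_nonneg (4 * deriv θ t * t - 1)]
    · nlinarith [sq_nonneg (4 * deriv θ t * t + 1)]
  have hg1 : IntegrableOn (fun t => 2 * (deriv θ t ^ 2 * t)) (Ioo a b) :=
    (h2.mono_set hIooab).const_mul 2
  have hg2 : IntegrableOn (fun t : ℝ => 1 / (8 * t)) (Ioo a b) := by
    apply (ContinuousOn.integrableOn_Icc ?_).mono_set Ioo_subset_Icc_self
    exact continuousOn_const.div (continuousOn_const.mul continuousOn_id)
      (fun x hx => by have := ha0.trans_le hx.1; positivity)
  have hgint : IntegrableOn (fun t => 2 * (deriv θ t ^ 2 * t) + 1 / (8 * t)) (Ioo a b) :=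
    hg1.add hg2
  have hder_int : IntegrableOn (deriv θ) (Ioo a b) := by
    refine Integrable.mono' hgint (aestronglyMeasurable_deriv θ _) ?_
    refine (ae_restrict_iff' measurableSet_Ioo).2 (ae_of_all _ fun t ht => ?_)
    rw [Real.norm_eq_abs]
    exact key t ⟨ht.1.le, ht.2.le⟩
  have hder_ii : IntervalIntegrable (deriv θ) volume a b :=
    (intervalIntegrable_iff_integrableOn_Ioc_of_le hab.le).2
      ((integrableOn_Ioc_iff_integrableOn_Ioo (by finiteness)).2 hder_int)
  have hg_ii : IntervalIntegrable (fun t => 2 * (deriv θ t ^ 2 * t) + 1 / (8 * t)) volume a b :=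
    (intervalIntegrable_iff_integrableOn_Ioc_of_le hab.le).2
      ((integrableOn_Ioc_iff_integrableOn_Ioo (by finiteness)).2 hgint)
  have hftc : ∫ x in a..b, deriv θ x = θ b - θ a := by
    apply intervalIntegral.integral_eq_sub_of_hasDerivAt
    · intro x hx
      rw [uIcc_of_le hab.le] at hx
      exact (hdiff x ⟨ha0.trans_le hx.1, lt_of_le_of_lt hx.2 hbR⟩).hasDerivAt
    · exact hder_ii
  have h0uIcc : (0:ℝ) ∉ uIcc a b := by
    rw [uIcc_of_le hab.le]
    intro h; exact absurd h.1 (not_le.2 ha0)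
  have hIoc0 : Ioc 0 r₀ ⊆ Ioo 0 R := fun x hx => ⟨hx.1, lt_of_le_of_lt hx.2 hr₀R⟩
  have h2ii : IntervalIntegrable (fun t => 2 * (deriv θ t ^ 2 * t)) volume a b :=
    (intervalIntegrable_iff_integrableOn_Ioc_of_le hab.le).2
      ((integrableOn_Ioc_iff_integrableOn_Ioo (by finiteness)).2 hg1)
  have hinv_ii : IntervalIntegrable (fun t : ℝ => 1 / (8 * t)) volume a b :=
    (intervalIntegrable_iff_integrableOn_Ioc_of_le hab.le).2
      ((integrableOn_Ioc_iff_integrableOn_Ioo (by finiteness)).2 hg2)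
  -- lower bound π/4 on the derivative integral
  have hdiffθ : π / 4 ≤ |∫ x in a..b, deriv θ x| := by
    rw [hftc]
    calc π / 4 = d - c := by rw [hd, hc]; ring
    _ ≤ θ a - θ b := by linarith
    _ ≤ |θ a - θ b| := le_abs_self _
    _ = |θ b - θ a| := abs_sub_comm _ _
  have habs : |∫ x in a..b, deriv θ x|
      ≤ ∫ x in a..b, (2 * (deriv θ x ^ 2 * x) + 1 / (8 * x)) := by
    refine (intervalIntegral.abs_integral_le_integral_abs hab.le).trans ?_
    exact intervalIntegral.integral_mono_on hab.le hder_ii.abs hg_ii key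
  have hsplit : ∫ x in a..b, (2 * (deriv θ x ^ 2 * x) + 1 / (8 * x))
      = (∫ x in a..b, 2 * (deriv θ x ^ 2 * x)) + ∫ x in a..b, 1 / (8 * x) :=
    intervalIntegral.integral_add h2ii hinv_ii
  have hlogval : ∫ x in a..b, (1:ℝ) / (8 * x) = (1 / 8) * Real.log (b / a) := by
    rw [intervalIntegral.integral_congr (g := fun x : ℝ => (1/8) * (1/x))
      (fun x _ => by ring), intervalIntegral.integral_const_mul, integral_one_div h0uIcc]
  have hE1 : ∫ x in a..b, deriv θ x ^ 2 * x ≤ ∫ r in Ioc 0 r₀, deriv θ r ^ 2 * r := by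
    rw [intervalIntegral.integral_of_le hab.le]
    refine setIntegral_mono_set (h2.mono_set hIoc0) ?_ (HasSubset.Subset.eventuallyLE hIocab)
    refine (ae_restrict_iff' measurableSet_Ioc).2 (ae_of_all _ fun r hr => ?_)
    have := hr.1; positivity
  have hEsplit : ∫ x in a..b, 2 * (deriv θ x ^ 2 * x)
      = 2 * ∫ x in a..b, deriv θ x ^ 2 * x := intervalIntegral.integral_const_mul 2 _
  -- sin lower bound gives log (b/a) < 2
  have hsin_ab : IntegrableOn (fun r => Real.sin (θ r) ^ 2 / r) (Ioo a b) :=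
    hsin.mono_set hIooab
  have hinv2 : IntegrableOn (fun r : ℝ => (1/2) * (1/r)) (Ioo a b) := by
    apply (ContinuousOn.integrableOn_Icc ?_).mono_set Ioo_subset_Icc_self
    exact continuousOn_const.mul (continuousOn_const.div continuousOn_id
      (fun x hx => (ha0.trans_le hx.1).ne'))
  have hmono : ∫ r in Ioo a b, ((1:ℝ)/2) * (1/r) ≤ ∫ r in Ioo a b, Real.sin (θ r) ^ 2 / r := by
    refine setIntegral_mono_on hinv2 hsin_ab measurableSet_Ioo (fun r hr => ?_)
    have hr0 : 0 < r := ha0.trans hr.1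
    have hx := hrange r hr
    have hhalf : 1/2 ≤ Real.sin (θ r) ^ 2 := by
      rw [← sin_sq_sub_int_mul_pi (θ r) m]
      refine half_le_sin_sq ?_ ?_
      · rw [hc] at hx; linarith [hx.1]
      · rw [hd] at hx; linarith [hx.2]
    rw [show ((1:ℝ)/2) * (1/r) = (1/2)/r by ring]
    exact div_le_div_of_nonneg_right hhalf hr0.le
  have hval2 : ∫ r in Ioo a b, ((1:ℝ)/2) * (1/r) = (1/2) * Real.log (b/a) := by
    rw [← integral_Ioc_eq_integral_Ioo, ← intervalIntegral.integral_of_le hab.le,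
      intervalIntegral.integral_const_mul, integral_one_div h0uIcc]
  have hS1 : ∫ r in Ioo a b, Real.sin (θ r) ^ 2 / r
      ≤ ∫ r in Ioc 0 r₀, Real.sin (θ r) ^ 2 / r := by
    rw [← integral_Ioc_eq_integral_Ioo]
    refine setIntegral_mono_set (hsin.mono_set hIoc0) ?_ (HasSubset.Subset.eventuallyLE hIocab)
    refine (ae_restrict_iff' measurableSet_Ioc).2 (ae_of_all _ fun r hr => ?_)
    have := hr.1; positivity
  have hlog2 : Real.log (b/a) < 2 := by
    rw [hval2] at hmono; linarith
  linarith [hdiffθ, habs, hsplit, hEsplit, hlogval, hE1, hE, hlog2]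

lemma band_lemma (R r₀ : ℝ) (hr₀ : 0 < r₀) (hr₀R : r₀ < R) (θ : ℝ → ℝ)
    (hcont : ContinuousOn θ (Ioc 0 R))
    (hdiff : ∀ r ∈ Ioo (0:ℝ) R, DifferentiableAt ℝ θ r)
    (h2 : IntegrableOn (fun r => deriv θ r ^ 2 * r) (Ioo 0 R))
    (hsin : IntegrableOn (fun r => Real.sin (θ r) ^ 2 / r) (Ioo 0 R))
    (hE : ∫ r in Ioc 0 r₀, deriv θ r ^ 2 * r < 1 / 4)
    (hS : ∫ r in Ioc 0 r₀, Real.sin (θ r) ^ 2 / r < 1)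
    (m : ℤ) (hm : |θ r₀ - m * π| ≤ π / 2) :
    ∀ r ∈ Ioc (0:ℝ) r₀, |θ r - m * π| ≤ 3 * π / 4 := by
  intro r hr
  by_contra hcon
  push_neg at hcon
  rcases abs_cases (θ r - m * π) with ⟨he, _⟩ | ⟨he, _⟩
  · have hgt : (m:ℝ) * π + 3 * π / 4 < θ r := by rw [he] at hcon; linarith
    exact crossing_false R r₀ hr₀ hr₀R θ hcont hdiff h2 hsin hE hS m
      (by have := abs_le.1 hm; linarith [this.2]) r hr hgt
  · have hgt : ((-m : ℤ):ℝ) * π + 3 * π / 4 < -θ r := by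
      push_cast; rw [he] at hcon; linarith
    have hder_eq : (fun s => deriv (fun u => -θ u) s ^ 2 * s)
        = fun s => deriv θ s ^ 2 * s := by
      funext s; rw [deriv.fun_neg]; ring
    have hsin_eq : (fun s => Real.sin (-θ s) ^ 2 / s)
        = fun s => Real.sin (θ s) ^ 2 / s := by
      funext s; rw [Real.sin_neg]; ring
    have h2' : IntegrableOn (fun s => deriv (fun u => -θ u) s ^ 2 * s) (Ioo 0 R) :=
      hder_eq.symm ▸ h2
    have hsin' : IntegrableOn (fun s => Real.sin (-θ s) ^ 2 / s) (Ioo 0 R) :=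
      hsin_eq.symm ▸ hsin
    have hE' : ∫ s in Ioc 0 r₀, deriv (fun u => -θ u) s ^ 2 * s < 1 / 4 :=
      hder_eq.symm ▸ hE
    have hS' : ∫ s in Ioc 0 r₀, Real.sin (-θ s) ^ 2 / s < 1 :=
      hsin_eq.symm ▸ hS
    have hm' : -θ r₀ ≤ ((-m : ℤ):ℝ) * π + π / 2 := by
      push_cast; have := abs_le.1 hm; linarith [this.1]
    exact crossing_false R r₀ hr₀ hr₀R (fun s => -θ s) hcont.neg
      (fun s hs => (hdiff s hs).neg) h2' hsin' hE' hS' (-m) hm' r hr hgt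

/-- Paper's Lemma 4.5: for `θ : (0,R] → ℝ` continuous, differentiable on `(0,R)`, with
`∫₀^R θ² r dr < ∞` and `∫₀^R θ′² r dr < ∞`, there exists `k ∈ ℤ` with
`∫₀^R (θ - kπ)²/r dr < ∞` if and only if `∫₀^R sin²(θ)/r dr < ∞`. -/
theorem integrable_sub_multiple_pi_iff_integrable_sin
    (R : ℝ) (hR : 0 < R) (θ : ℝ → ℝ)
    (hcont : ContinuousOn θ (Ioc 0 R))
    (hdiff : ∀ r ∈ Ioo (0:ℝ) R, DifferentiableAt ℝ θ r)
    (h1 : IntegrableOn (fun r => θ r ^ 2 * r) (Ioo 0 R))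
    (h2 : IntegrableOn (fun r => deriv θ r ^ 2 * r) (Ioo 0 R)) :
    (∃ k : ℤ, IntegrableOn (fun r => (θ r - (k : ℝ) * π) ^ 2 / r) (Ioo 0 R)) ↔
      IntegrableOn (fun r => Real.sin (θ r) ^ 2 / r) (Ioo 0 R) := by
  constructor
  · rintro ⟨k, hk⟩
    refine Integrable.mono' hk ?_ ?_
    · refine ContinuousOn.aestronglyMeasurable ?_ measurableSet_Ioo
      exact ((Real.continuous_sin.comp_continuousOn
        (hcont.mono Ioo_subset_Ioc_self)).pow 2).div continuousOn_id
        (fun x hx => hx.1.ne')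
    · refine (ae_restrict_iff' measurableSet_Ioo).2 (ae_of_all _ fun r hr => ?_)
      rw [Real.norm_eq_abs, abs_of_nonneg (by have := hr.1; positivity)]
      have hb : Real.sin (θ r) ^ 2 ≤ (θ r - k * π) ^ 2 := by
        rw [← sin_sq_sub_int_mul_pi (θ r) k]
        have h := abs_sin_le_abs' (θ r - k * π)
        calc Real.sin (θ r - k * π) ^ 2 = |Real.sin (θ r - k * π)| ^ 2 := (sq_abs _).symm
        _ ≤ |θ r - k * π| ^ 2 := pow_le_pow_left₀ (abs_nonneg _) h 2
        _ = (θ r - k * π) ^ 2 := sq_abs _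
      exact div_le_div_of_nonneg_right hb hr.1.le
  · intro hsin
    -- find a small radius with small tail integrals
    have tendsto_small : ∀ f : ℝ → ℝ, IntegrableOn f (Ioo 0 R) →
        Tendsto (fun t => ∫ r in Ioc 0 t, f r ∂(volume.restrict (Ioo 0 R)))
          (𝓝[>] (0:ℝ)) (𝓝 0) := by
      intro f hf
      refine hf.tendsto_setIntegral_nhds_zero ?_
      have hb : ∀ t : ℝ, (volume.restrict (Ioo 0 R)) (Ioc 0 t) ≤ ENNReal.ofReal t := by
        intro t
        rw [Measure.restrict_apply measurableSet_Ioc]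
        refine le_trans (measure_mono inter_subset_left) ?_
        rw [Real.volume_Ioc]; simp
      have h0 : Tendsto (fun t : ℝ => ENNReal.ofReal t) (𝓝[>] (0:ℝ)) (𝓝 0) := by
        have h1 : Tendsto (fun t : ℝ => t) (𝓝[>] (0:ℝ)) (𝓝 0) :=
          tendsto_id.mono_left nhdsWithin_le_nhds
        simpa using ENNReal.tendsto_ofReal h1
      exact tendsto_of_tendsto_of_tendsto_of_le_of_le tendsto_const_nhds h0
        (fun t => zero_le) hb
    have hev : ∀ᶠ t in 𝓝[>] (0:ℝ),
        ((∫ r in Ioc 0 t, deriv θ r ^ 2 * r ∂(volume.restrict (Ioo 0 R))) < 1/4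
        ∧ (∫ r in Ioc 0 t, Real.sin (θ r) ^ 2 / r ∂(volume.restrict (Ioo 0 R))) < 1)
        ∧ t ∈ Ioo (0:ℝ) R := by
      refine (((tendsto_small _ h2).eventually_lt_const (by norm_num)).and
        ((tendsto_small _ hsin).eventually_lt_const (by norm_num))).and ?_
      have hmem : Ioo (0:ℝ) R ∈ 𝓝[>] (0:ℝ) := Ioo_mem_nhdsGT_of_mem (by exact ⟨le_refl (0:ℝ), hR⟩)
      exact eventually_of_mem hmem (fun x hx => hx)
    obtain ⟨r₀, ⟨hE0, hS0⟩, hr₀pos, hr₀R⟩ := hev.exists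
    have hres : ∀ f : ℝ → ℝ, (∫ r in Ioc 0 r₀, f r ∂(volume.restrict (Ioo 0 R)))
        = ∫ r in Ioc 0 r₀, f r := by
      intro f
      rw [Measure.restrict_restrict measurableSet_Ioc,
        inter_eq_self_of_subset_left (show Ioc (0:ℝ) r₀ ⊆ Ioo 0 R from
          fun x hx => ⟨hx.1, lt_of_le_of_lt hx.2 hr₀R⟩)]
    rw [hres] at hE0 hS0
    set m : ℤ := round (θ r₀ / π) with hmdef
    have hπ := Real.pi_pos
    have hm : |θ r₀ - m * π| ≤ π / 2 := by
      have h := abs_sub_round (θ r₀ / π)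
      rw [show θ r₀ - m * π = (θ r₀ / π - m) * π by field_simp, abs_mul,
        abs_of_pos hπ]
      nlinarith
    have hband := band_lemma R r₀ hr₀pos hr₀R θ hcont hdiff h2 hsin hE0 hS0 m hm
    refine ⟨m, ?_⟩
    have hsub1 : Ioc (0:ℝ) r₀ ⊆ Ioo 0 R := fun x hx => ⟨hx.1, lt_of_le_of_lt hx.2 hr₀R⟩
    have hsub2 : Ioo r₀ R ⊆ Ioo (0:ℝ) R := fun x hx => ⟨hr₀pos.trans hx.1, hx.2⟩
    have hp1 : IntegrableOn (fun r => (θ r - (m:ℝ) * π) ^ 2 / r) (Ioc 0 r₀) := by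
      refine Integrable.mono' ((hsin.mono_set hsub1).const_mul (9 * π ^ 2 / 8)) ?_ ?_
      · refine ContinuousOn.aestronglyMeasurable ?_ measurableSet_Ioc
        exact (((hcont.mono (Ioc_subset_Ioc le_rfl hr₀R.le)).sub
          continuousOn_const).pow 2).div continuousOn_id (fun x hx => hx.1.ne')
      · refine (ae_restrict_iff' measurableSet_Ioc).2 (ae_of_all _ fun r hr => ?_)
        rw [Real.norm_eq_abs, abs_of_nonneg (by have := hr.1; positivity)]
        have hb := sq_le_K_mul_sin_sq (hband r hr)
        rw [sin_sq_sub_int_mul_pi] at hb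
        calc (θ r - (m:ℝ) * π) ^ 2 / r ≤ (9 * π ^ 2 / 8 * Real.sin (θ r) ^ 2) / r :=
          div_le_div_of_nonneg_right hb hr.1.le
        _ = 9 * π ^ 2 / 8 * (Real.sin (θ r) ^ 2 / r) := by ring
    have hp2 : IntegrableOn (fun r => (θ r - (m:ℝ) * π) ^ 2 / r) (Ioo r₀ R) := by
      refine Integrable.mono' (((h1.mono_set hsub2).const_mul (2 / r₀ ^ 2)).add
        ((integrableOn_const_iff (C := 2 * ((m:ℝ) * π) ^ 2 / r₀) (by finiteness)).2
          (Or.inr measure_Ioo_lt_top))) ?_ ?_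
      · refine ContinuousOn.aestronglyMeasurable ?_ measurableSet_Ioo
        exact (((hcont.mono (fun x hx => ⟨hr₀pos.trans hx.1, hx.2.le⟩)).sub
          continuousOn_const).pow 2).div continuousOn_id
          (fun x hx => (hr₀pos.trans hx.1).ne')
      · refine (ae_restrict_iff' measurableSet_Ioo).2 (ae_of_all _ fun r hr => ?_)
        have hr0 : 0 < r := hr₀pos.trans hr.1
        rw [Real.norm_eq_abs, abs_of_nonneg (by positivity)]
        show (θ r - (m:ℝ) * π) ^ 2 / r
          ≤ 2 / r₀ ^ 2 * (θ r ^ 2 * r) + 2 * ((m:ℝ) * π) ^ 2 / r₀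
        have b1 : (θ r - (m:ℝ) * π) ^ 2 ≤ 2 * θ r ^ 2 + 2 * ((m:ℝ) * π) ^ 2 := by
          nlinarith [sq_nonneg (θ r + (m:ℝ) * π)]
        have b2 : (θ r - (m:ℝ) * π) ^ 2 / r
            ≤ (2 * θ r ^ 2 + 2 * ((m:ℝ) * π) ^ 2) / r :=
          div_le_div_of_nonneg_right b1 hr0.le
        have b3 : (2 * θ r ^ 2 + 2 * ((m:ℝ) * π) ^ 2) / r
            = 2 * θ r ^ 2 / r + 2 * ((m:ℝ) * π) ^ 2 / r := add_div _ _ _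
        have b4 : 2 * θ r ^ 2 / r ≤ 2 / r₀ ^ 2 * (θ r ^ 2 * r) := by
          have hle : 1 / r ≤ r / r₀ ^ 2 := by
            rw [div_le_div_iff₀ hr0 (by positivity)]
            nlinarith [hr.1, hr₀pos]
          calc 2 * θ r ^ 2 / r = 2 * θ r ^ 2 * (1 / r) := by ring
          _ ≤ 2 * θ r ^ 2 * (r / r₀ ^ 2) :=
            mul_le_mul_of_nonneg_left hle (by positivity)
          _ = 2 / r₀ ^ 2 * (θ r ^ 2 * r) := by ring
        have b5 : 2 * ((m:ℝ) * π) ^ 2 / r ≤ 2 * ((m:ℝ) * π) ^ 2 / r₀ := by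
          gcongr
          exact hr.1.le
        linarith
    exact ((hp1.union hp2).mono_set (fun x hx => by
      rcases le_or_gt x r₀ with h | h
      · exact Or.inl ⟨hx.1, h⟩
      · exact Or.inr ⟨h, hx.2⟩))
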